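/- For any GK-model M = (W,S,e), define S⁺(x,y) = min(S_□(x,y), S_◇(x,y)) where S_□(x,y) = inf over all formulas φ of (e(x,□φ) ⇒ e(y,φ)) and S_◇(x,y) = inf over all formulas φ of (e(y,φ) ⇒ e(x,◇φ)). Then S(x,y) ≤ S⁺(x,y), and the model (W, S⁺, e↾Var) assigns the same truth value as M to every formula at every world: e⁺(x,φ) = e(x,φ) for all x, φ. -/
import Mathlib


open scoped Classical

noncomputable def gimp (a b : ℝ) : ℝ := if a ≤ b then 1 else b

inductive GForm : Type where
  | bot : GForm
  | var : ℕ → GForm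
  | and : GForm → GForm → GForm
  | or : GForm → GForm → GForm
  | imp : GForm → GForm → GForm
  | box : GForm → GForm
  | dia : GForm → GForm

def GForm.neg (φ : GForm) : GForm := φ.imp .bot

noncomputable def ev {W : Type} (S : W → W → ℝ) (e : ℕ → W → ℝ) : GForm → W → ℝ
  | .bot, _ => 0
  | .var p, x => e p x
  | .and φ ψ, x => min (ev S e φ x) (ev S e ψ x)
  | .or φ ψ, x => max (ev S e φ x) (ev S e ψ x)
  | .imp φ ψ, x => gimp (ev S e φ x) (ev S e ψ x)
  | .box φ, x => ⨅ y, gimp (S x y) (ev S e φ y)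
  | .dia φ, x => ⨆ y, min (S x y) (ev S e φ y)

noncomputable def Splus {W : Type} (S : W → W → ℝ) (e : ℕ → W → ℝ) (x y : W) : ℝ :=
  min (⨅ φ : GForm, gimp (ev S e (.box φ) x) (ev S e φ y))
      (⨅ φ : GForm, gimp (ev S e φ y) (ev S e (.dia φ) x))

instance : Nonempty GForm := ⟨GForm.bot⟩

lemma gimp_nonneg {a b : ℝ} (hb : 0 ≤ b) : 0 ≤ gimp a b := by
  unfold gimp; split <;> linarith

lemma gimp_le_one {a b : ℝ} (hb : b ≤ 1) : gimp a b ≤ 1 := by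
  unfold gimp; split <;> linarith

lemma le_gimp {s a b : ℝ} (hs : s ≤ 1) (h : min s a ≤ b) : s ≤ gimp a b := by
  unfold gimp
  by_cases h' : a ≤ b
  · simpa [h']
  · rcases min_le_iff.1 h with h1 | h1
    · simpa [h']
    · exact absurd h1 h'

lemma min_le_of_le_gimp {s a b : ℝ} (h : s ≤ gimp a b) : min s a ≤ b := by
  unfold gimp at h
  by_cases h' : a ≤ b
  · exact le_trans (min_le_right _ _) h'
  · simp [h'] at h
    exact le_trans (min_le_left _ _) h

lemma gimp_anti {a a' b : ℝ} (hb : b ≤ 1) (h : a' ≤ a) : gimp a b ≤ gimp a' b := by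
  unfold gimp
  by_cases h1 : a ≤ b <;> by_cases h2 : a' ≤ b <;>
    simp [h1, h2] <;> first | exact hb | exact absurd (le_trans h h1) h2

lemma ev_mem {W : Type} [Nonempty W] (S : W → W → ℝ) (e : ℕ → W → ℝ)
    (hS : ∀ x y, 0 ≤ S x y) (he : ∀ p x, e p x ∈ Set.Icc (0:ℝ) 1) :
    ∀ (φ : GForm) (x : W), ev S e φ x ∈ Set.Icc (0:ℝ) 1 := by
  intro φ
  induction φ with
  | bot => intro x; exact ⟨le_refl 0, zero_le_one⟩
  | var p => intro x; exact he p x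
  | and φ ψ ihφ ihψ =>
      intro x
      exact ⟨le_min (ihφ x).1 (ihψ x).1, min_le_of_left_le (ihφ x).2⟩
  | or φ ψ ihφ ihψ =>
      intro x
      exact ⟨le_max_of_le_left (ihφ x).1, max_le (ihφ x).2 (ihψ x).2⟩
  | imp φ ψ ihφ ihψ =>
      intro x
      exact ⟨gimp_nonneg (ihψ x).1, gimp_le_one (ihψ x).2⟩
  | box φ ih =>
      intro x
      have hbdd : BddBelow (Set.range fun y => gimp (S x y) (ev S e φ y)) := by
        refine ⟨0, ?_⟩
        rintro _ ⟨y, rfl⟩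
        exact gimp_nonneg (ih y).1
      constructor
      · exact le_ciInf fun y => gimp_nonneg (ih y).1
      · exact ciInf_le_of_le hbdd (Classical.arbitrary W)
          (gimp_le_one (ih _).2)
  | dia φ ih =>
      intro x
      have hbdd : BddAbove (Set.range fun y => min (S x y) (ev S e φ y)) := by
        refine ⟨1, ?_⟩
        rintro _ ⟨y, rfl⟩
        exact min_le_of_right_le (ih y).2
      constructor
      · exact le_ciSup_of_le hbdd (Classical.arbitrary W)
          (le_min (hS x _) (ih _).1)
      · exact ciSup_le fun y => min_le_of_right_le (ih y).2

theorem stmt10 (W : Type) [Nonempty W] (S : W → W → ℝ) (e : ℕ → W → ℝ)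
    (hS : ∀ x y, S x y ∈ Set.Icc (0:ℝ) 1) (he : ∀ p x, e p x ∈ Set.Icc (0:ℝ) 1) :
    (∀ x y, S x y ≤ Splus S e x y) ∧
    (∀ (φ : GForm) (x : W), ev (Splus S e) e φ x = ev S e φ x) := by
  have hev := ev_mem S e (fun x y => (hS x y).1) he
  -- bddness of the two families in Splus
  have hbddB : ∀ x y, BddBelow (Set.range fun φ : GForm =>
      gimp (ev S e (.box φ) x) (ev S e φ y)) := by
    intro x y
    refine ⟨0, ?_⟩
    rintro _ ⟨φ, rfl⟩
    exact gimp_nonneg (hev φ y).1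
  have hbddD : ∀ x y, BddBelow (Set.range fun φ : GForm =>
      gimp (ev S e φ y) (ev S e (.dia φ) x)) := by
    intro x y
    refine ⟨0, ?_⟩
    rintro _ ⟨φ, rfl⟩
    exact gimp_nonneg (hev (.dia φ) x).1
  -- bdd of dia-sup family
  have hbddSup : ∀ (S' : W → W → ℝ) (φ : GForm) (x : W),
      BddAbove (Set.range fun y => min (S' x y) (ev S e φ y)) := by
    intro S' φ x
    refine ⟨1, ?_⟩
    rintro _ ⟨y, rfl⟩
    exact min_le_of_right_le (hev φ y).2
  have hle : ∀ x y, S x y ≤ Splus S e x y := by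
    intro x y
    refine le_min (le_ciInf fun φ => ?_) (le_ciInf fun φ => ?_)
    · -- S x y ≤ gimp (ev (□φ) x) (ev φ y)
      refine le_gimp (hS x y).2 ?_
      rw [min_comm]
      refine min_le_of_le_gimp ?_
      exact ciInf_le (by
        refine ⟨0, ?_⟩
        rintro _ ⟨z, rfl⟩
        exact gimp_nonneg (hev φ z).1) y
    · -- S x y ≤ gimp (ev φ y) (ev (◇φ) x)
      refine le_gimp (hS x y).2 ?_
      exact le_ciSup (hbddSup S φ x) y
  refine ⟨hle, ?_⟩
  -- Splus bounds
  have hSp : ∀ x y, Splus S e x y ∈ Set.Icc (0:ℝ) 1 := by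
    intro x y
    constructor
    · exact le_min (le_ciInf fun φ => gimp_nonneg (hev φ y).1)
        (le_ciInf fun φ => gimp_nonneg (hev (.dia φ) x).1)
    · exact min_le_of_left_le (ciInf_le_of_le (hbddB x y) GForm.bot
        (gimp_le_one (hev GForm.bot y).2))
  intro φ
  induction φ with
  | bot => intro x; rfl
  | var p => intro x; rfl
  | and φ ψ ihφ ihψ => intro x; show min _ _ = min _ _; rw [ihφ x, ihψ x]
  | or φ ψ ihφ ihψ => intro x; show max _ _ = max _ _; rw [ihφ x, ihψ x]
  | imp φ ψ ihφ ihψ => intro x; show gimp _ _ = gimp _ _; rw [ihφ x, ihψ x]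
  | box φ ih =>
      intro x
      show (⨅ y, gimp (Splus S e x y) (ev (Splus S e) e φ y))
        = ⨅ y, gimp (S x y) (ev S e φ y)
      have hrw : ∀ y, ev (Splus S e) e φ y = ev S e φ y := ih
      simp only [hrw]
      have hbddL : BddBelow (Set.range fun y => gimp (Splus S e x y) (ev S e φ y)) := by
        refine ⟨0, ?_⟩
        rintro _ ⟨y, rfl⟩
        exact gimp_nonneg (hev φ y).1
      apply le_antisymm
      · refine ciInf_mono hbddL fun y => ?_
        exact gimp_anti (hev φ y).2 (hle x y)
      · refine le_ciInf fun y => ?_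
        refine le_gimp (hev (.box φ) x).2 ?_
        rw [min_comm]
        refine min_le_of_le_gimp ?_
        exact le_trans (min_le_left _ _)
          (ciInf_le (hbddB x y) φ)
  | dia φ ih =>
      intro x
      show (⨆ y, min (Splus S e x y) (ev (Splus S e) e φ y))
        = ⨆ y, min (S x y) (ev S e φ y)
      have hrw : ∀ y, ev (Splus S e) e φ y = ev S e φ y := ih
      simp only [hrw]
      apply le_antisymm
      · refine ciSup_le fun y => ?_
        have h1 : Splus S e x y ≤ gimp (ev S e φ y) (ev S e (.dia φ) x) :=
          le_trans (min_le_right _ _) (ciInf_le (hbddD x y) φ)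
        exact min_le_of_le_gimp h1
      · refine ciSup_le fun y => ?_
        refine le_ciSup_of_le (hbddSup (Splus S e) φ x) y ?_
        exact min_le_min_right _ (hle x y)
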